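/- Let d ≥ 3, let V, W be mutually orthogonal Latin squares of order d, and define |Φ_j⟩ = (1/√d) Σ_{k=1}^{d} |k⟩|V_{jk}⟩|W_{jk}⟩. For any unit vector α ∈ ℂ^d, the state |Φ⟩ = Σ_{j=1}^{d} α_j |Φ_j⟩ has all three single-party reduced density matrices equal to I_d/d. Hence the linear map |j⟩ ↦ |Φ_j⟩ masks all d-level quantum states into the tripartite system ℂ^d ⊗ ℂ^d ⊗ ℂ^d. -/

import Mathlib

/-- A Latin square: all rows and columns are bijections. -/
def IsLatinSquare {d : ℕ} (L : Fin d → Fin d → Fin d) : Prop :=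
  (∀ j, Function.Bijective (fun k => L j k)) ∧ (∀ k, Function.Bijective (fun j => L j k))

/-- Latin-square masking into three parties: for mutually orthogonal Latin squares
`V, W` of order `d ≥ 3` and `|Φ_j⟩ = (1/√d) ∑ k |k⟩|V_{jk}⟩|W_{jk}⟩`, the state
`|Φ⟩ = ∑ j α_j |Φ_j⟩` (any unit `α`) has all three single-party reduced density
matrices equal to `I_d/d`; hence `|j⟩ ↦ |Φ_j⟩` masks all `d`-level states. -/
theorem stmt_13 (d : ℕ) (hd : 3 ≤ d) (V W : Fin d → Fin d → Fin d)
    (hV : IsLatinSquare V) (hW : IsLatinSquare W)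
    (horth : Function.Bijective (fun p : Fin d × Fin d => (V p.1 p.2, W p.1 p.2)))
    (α : Fin d → ℂ) (hα : (∑ j : Fin d, ‖α j‖ ^ 2) = 1)
    (Φj : Fin d → Fin d × Fin d × Fin d → ℂ)
    (hΦj : ∀ (j : Fin d) (t : Fin d × Fin d × Fin d),
      Φj j t = if V j t.1 = t.2.1 ∧ W j t.1 = t.2.2 then ((Real.sqrt d : ℂ))⁻¹ else 0)
    (Φ : Fin d × Fin d × Fin d → ℂ) (hΦ : ∀ t, Φ t = ∑ j : Fin d, α j * Φj j t) :
    (∀ x x' : Fin d, (∑ b : Fin d, ∑ c : Fin d, Φ (x, b, c) * star (Φ (x', b, c)))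
        = if x = x' then (1 / d : ℂ) else 0) ∧
    (∀ x x' : Fin d, (∑ a : Fin d, ∑ c : Fin d, Φ (a, x, c) * star (Φ (a, x', c)))
        = if x = x' then (1 / d : ℂ) else 0) ∧
    (∀ x x' : Fin d, (∑ a : Fin d, ∑ b : Fin d, Φ (a, b, x) * star (Φ (a, b, x')))
        = if x = x' then (1 / d : ℂ) else 0) := by
  have hd0 : 0 < d := by omega
  set s : ℂ := ((Real.sqrt d : ℝ) : ℂ)⁻¹ with hs_def
  have hdR : (0:ℝ) < (d:ℝ) := by exact_mod_cast hd0
  have hs2 : s * star s = (1 / d : ℂ) := by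
    rw [hs_def]
    rw [star_inv₀, Complex.star_def, Complex.conj_ofReal, ← mul_inv]
    rw [← Complex.ofReal_mul, Real.mul_self_sqrt hdR.le]
    norm_num
  -- column equivalences of V
  let eV : Fin d → (Fin d ≃ Fin d) := fun a => Equiv.ofBijective _ (hV.2 a)
  have heV : ∀ a j, eV a j = V j a := fun a j => rfl
  -- closed form for Φ
  have hΦ' : ∀ a b c : Fin d,
      Φ (a, b, c) = if W ((eV a).symm b) a = c then α ((eV a).symm b) * s else 0 := by
    intro a b c
    rw [hΦ (a, b, c)]
    have step : ∀ j : Fin d, α j * Φj j (a, b, c)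
        = if j = (eV a).symm b then (if W j a = c then α j * s else 0) else 0 := by
      intro j
      rw [hΦj]
      have h1 : (j = (eV a).symm b) ↔ V j a = b := by
        rw [eq_comm, Equiv.symm_apply_eq, eq_comm]
        exact Iff.rfl
      by_cases hj : j = (eV a).symm b
      · have hVb : V j a = b := h1.mp hj
        by_cases hc : W j a = c
        · rw [if_pos ⟨hVb, hc⟩, if_pos hj, if_pos hc]
        · rw [if_neg (fun h => hc h.2), if_pos hj, if_neg hc, mul_zero]
      · rw [if_neg (fun h => hj (h1.mpr h.1)), if_neg hj, mul_zero]
    rw [Finset.sum_congr rfl fun j _ => step j]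
    simp
  -- inner sum over the last coordinate
  have hsum_c : ∀ (p q : Fin d) (u v : ℂ),
      (∑ c : Fin d, (if p = c then u * s else 0) * star (if q = c then v * s else 0))
        = if p = q then u * star v * (1 / d) else 0 := by
    intro p q u v
    rw [Finset.sum_eq_single p (fun c _ hc => by rw [if_neg (Ne.symm hc), zero_mul])
      (fun h => absurd (Finset.mem_univ p) h)]
    by_cases h : p = q
    · subst h
      rw [if_pos rfl, if_pos rfl, if_pos rfl, star_mul', ← hs2]; ring
    · rw [if_pos rfl, if_neg (Ne.symm h), if_neg h, star_zero, mul_zero]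
  have hnorm : ∀ j : Fin d, α j * star (α j) = ((‖α j‖ ^ 2 : ℝ) : ℂ) := by
    intro j
    rw [Complex.star_def, Complex.mul_conj, Complex.normSq_eq_norm_sq]
  have hαsum : (∑ j : Fin d, α j * star (α j)) = 1 := by
    rw [Finset.sum_congr rfl fun j _ => hnorm j]
    rw [← Complex.ofReal_sum, hα, Complex.ofReal_one]
  refine ⟨?_, ?_, ?_⟩
  · -- first marginal
    intro x x'
    have inner : ∀ b : Fin d, (∑ c : Fin d, Φ (x, b, c) * star (Φ (x', b, c)))
        = if W ((eV x).symm b) x = W ((eV x').symm b) x'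
            then α ((eV x).symm b) * star (α ((eV x').symm b)) * (1 / d) else 0 := by
      intro b
      have := hsum_c (W ((eV x).symm b) x) (W ((eV x').symm b) x')
        (α ((eV x).symm b)) (α ((eV x').symm b))
      rw [← this]
      exact Finset.sum_congr rfl fun c _ => by rw [hΦ' x b c, hΦ' x' b c]
    rw [Finset.sum_congr rfl fun b _ => inner b]
    by_cases hxx : x = x'
    · subst hxx
      simp only [eq_self_iff_true, if_true]
      rw [Equiv.sum_comp (eV x).symm (fun j => α j * star (α j) * (1 / (d:ℂ))), ← Finset.sum_mul,
        hαsum, one_mul]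
    · rw [if_neg hxx]
      refine Finset.sum_eq_zero fun b _ => ?_
      rw [if_neg]
      intro hw
      have hv : V ((eV x).symm b) x = V ((eV x').symm b) x' := by
        have h1 : V ((eV x).symm b) x = b := (eV x).apply_symm_apply b
        have h2 : V ((eV x').symm b) x' = b := (eV x').apply_symm_apply b
        rw [h1, h2]
      have := horth.injective (a₁ := ((eV x).symm b, x)) (a₂ := ((eV x').symm b, x'))
        (by simp [hv, hw])
      exact hxx (congrArg Prod.snd this)
  · -- second marginal
    intro x x'
    have inner : ∀ a : Fin d, (∑ c : Fin d, Φ (a, x, c) * star (Φ (a, x', c)))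
        = if W ((eV a).symm x) a = W ((eV a).symm x') a
            then α ((eV a).symm x) * star (α ((eV a).symm x')) * (1 / d) else 0 := by
      intro a
      have := hsum_c (W ((eV a).symm x) a) (W ((eV a).symm x') a)
        (α ((eV a).symm x)) (α ((eV a).symm x'))
      rw [← this]
      exact Finset.sum_congr rfl fun c _ => by rw [hΦ' a x c, hΦ' a x' c]
    rw [Finset.sum_congr rfl fun a _ => inner a]
    by_cases hxx : x = x'
    · subst hxx
      simp only [eq_self_iff_true, if_true]
      have hbij : Function.Bijective (fun a : Fin d => (eV a).symm x) := by
        constructor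
        · intro a a' h
          dsimp only at h
          have h1 : V ((eV a).symm x) a = x := (eV a).apply_symm_apply x
          have h2 : V ((eV a').symm x) a' = x := (eV a').apply_symm_apply x
          rw [h] at h1
          exact (hV.1 ((eV a').symm x)).injective (h1.trans h2.symm)
        · intro j
          obtain ⟨a, ha⟩ := (hV.1 j).surjective x
          exact ⟨a, by rw [Equiv.symm_apply_eq]; exact ha.symm⟩
      rw [Fintype.sum_bijective _ hbij
          (fun a => α ((eV a).symm x) * star (α ((eV a).symm x)) * (1 / (d:ℂ)))
          (fun j => α j * star (α j) * (1 / (d:ℂ))) (fun a => rfl),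
        ← Finset.sum_mul, hαsum, one_mul]
    · rw [if_neg hxx]
      refine Finset.sum_eq_zero fun a _ => ?_
      rw [if_neg]
      intro hw
      have hj : (eV a).symm x = (eV a).symm x' := (hW.2 a).injective hw
      exact hxx ((eV a).symm.injective.eq_iff.mp hj)
  · -- third marginal
    intro x x'
    have inner : ∀ a : Fin d, (∑ b : Fin d, Φ (a, b, x) * star (Φ (a, b, x')))
        = ∑ j : Fin d, (if W j a = x then α j * s else 0) * star (if W j a = x' then α j * s else 0) := by
      intro a
      rw [← Equiv.sum_comp (eV a).symm
        (fun j => (if W j a = x then α j * s else 0) * star (if W j a = x' then α j * s else 0))]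
      exact Finset.sum_congr rfl fun b _ => by rw [hΦ' a b x, hΦ' a b x']
    rw [Finset.sum_congr rfl fun a _ => inner a]
    by_cases hxx : x = x'
    · subst hxx
      rw [if_pos rfl, Finset.sum_comm]
      have hrow : ∀ j : Fin d,
          (∑ a : Fin d, (if W j a = x then α j * s else 0) * star (if W j a = x then α j * s else 0))
            = α j * star (α j) * (1 / d) := by
        intro j
        obtain ⟨a0, ha0⟩ := (hW.1 j).surjective x
        rw [Finset.sum_eq_single a0]
        · rw [if_pos ha0, star_mul', ← hs2]; ring
        · intro a _ ha
          have : ¬ W j a = x := fun h => ha ((hW.1 j).injective (h.trans ha0.symm))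
          simp [this]
        · simp
      rw [Finset.sum_congr rfl fun j _ => hrow j, ← Finset.sum_mul, hαsum, one_mul]
    · rw [if_neg hxx]
      refine Finset.sum_eq_zero fun a _ => Finset.sum_eq_zero fun j _ => ?_
      by_cases h1 : W j a = x
      · have h2 : ¬ W j a = x' := fun h => hxx (h1.symm.trans h)
        simp [h2]
      · simp [h1]
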